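/- Let f ∈ F_q[t] be squarefree of degree n ≥ 2, B = F_q[t]/(f), and d a positive integer with q ≥ n. Then M(a,d) := (1/|B^×|)·(Σ_{g monic, deg g ≤ d, gcd(g,f)=1} Λ(g))² satisfies M(a,d) ≥ q^{2d−n} − 2dn·q^{d−n}. -/

import Mathlib

open scoped Classical

/-- The von Mangoldt function on `F_q[t]`: `Λ(h) = deg p` if `h = u * p ^ k` with `p`
monic irreducible, `u` a unit, `k ≥ 1`, and `Λ(h) = 0` otherwise. -/
noncomputable def polyLambda {F : Type*} [Field F] (h : Polynomial F) : ℕ :=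
  if hh : ∃ p : Polynomial F, (p.Monic ∧ Irreducible p) ∧
      ∃ u : F, u ≠ 0 ∧ ∃ k : ℕ, 1 ≤ k ∧ h = Polynomial.C u * p ^ k
  then (Classical.choose hh).natDegree else 0

section Aux

open Polynomial Finset UniqueFactorizationMonoid

variable {F : Type*} [Field F] [Fintype F]

noncomputable instance degLTfin (k : ℕ) : Fintype (Polynomial.degreeLT F k) :=
  Fintype.ofEquiv _ (Polynomial.degreeLTEquiv F k).toEquiv.symm

/-- the finset of monic polynomials of degree exactly k -/
noncomputable def MD (k : ℕ) : Finset (Polynomial F) :=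
  (Finset.univ : Finset (Polynomial.degreeLT F k)).image (fun v => Polynomial.X ^ k + v.1)

lemma mem_MD {k : ℕ} {g : Polynomial F} : g ∈ MD k ↔ g.Monic ∧ g.natDegree = k := by
  constructor
  · rintro hg
    simp only [MD, Finset.mem_image] at hg
    obtain ⟨v, -, rfl⟩ := hg
    have hv : (v : Polynomial F).degree < (k : WithBot ℕ) := (Polynomial.mem_degreeLT).1 v.2
    have hXk : (Polynomial.X ^ k : Polynomial F).degree = (k : WithBot ℕ) := by
      simpa using Polynomial.degree_X_pow (R := F) k
    have hlt : (v : Polynomial F).degree < (Polynomial.X ^ k : Polynomial F).degree := by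
      rw [hXk]; exact hv
    have hmon : (Polynomial.X ^ k + (v : Polynomial F)).Monic :=
      Polynomial.Monic.add_of_left (Polynomial.monic_X_pow k) hlt
    refine ⟨hmon, ?_⟩
    have hdeg : (Polynomial.X ^ k + (v : Polynomial F)).degree = (k : WithBot ℕ) := by
      rw [Polynomial.degree_add_eq_left_of_degree_lt hlt, hXk]
    exact Polynomial.natDegree_eq_of_degree_eq_some hdeg
  · rintro ⟨hm, rfl⟩
    simp only [MD, Finset.mem_image]
    have h1 : g - Polynomial.X ^ g.natDegree ∈ Polynomial.degreeLT F g.natDegree := by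
      rw [Polynomial.mem_degreeLT]
      rcases eq_or_ne g (Polynomial.X ^ g.natDegree) with h | h
      · rw [← h]
        simp only [sub_self, Polynomial.degree_zero]
        exact WithBot.bot_lt_coe _
      · have hdq : g.degree = (Polynomial.X ^ g.natDegree : Polynomial F).degree := by
          rw [Polynomial.degree_eq_natDegree hm.ne_zero, Polynomial.degree_X_pow]
        have := Polynomial.degree_sub_lt hdq hm.ne_zero
          (by simp [hm.leadingCoeff, Polynomial.leadingCoeff_X_pow])
        rw [Polynomial.degree_eq_natDegree hm.ne_zero] at this
        exact this
    exact ⟨⟨_, h1⟩, Finset.mem_univ _, by ring⟩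

lemma card_MD (k : ℕ) : (MD (F := F) k).card = Fintype.card F ^ k := by
  rw [MD, Finset.card_image_of_injective _ (fun a b h => Subtype.ext (by simpa using h))]
  rw [Finset.card_univ]
  rw [Fintype.card_congr (Polynomial.degreeLTEquiv F k).toEquiv]
  simp

lemma monic_eq_of_rep {p p' : Polynomial F} {u : F} {k k' : ℕ}
    (hm : p.Monic) (hi : Irreducible p) (hk : 1 ≤ k)
    (hm' : p'.Monic) (hi' : Irreducible p') (hk' : 1 ≤ k')
    (heq : p ^ k = Polynomial.C u * p' ^ k') : p' = p ∧ u = 1 := by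
  have hu : u = 1 := by
    have h1 : (p ^ k).leadingCoeff = 1 := (hm.pow k).leadingCoeff
    rw [heq] at h1
    rw [Polynomial.leadingCoeff_mul, Polynomial.leadingCoeff_C, (hm'.pow k').leadingCoeff,
      mul_one] at h1
    exact h1
  subst hu
  rw [map_one, one_mul] at heq
  have hdvd : p' ∣ p ^ k := heq ▸ dvd_pow_self p' (by omega)
  have hdvd2 : p' ∣ p := (hi'.prime.dvd_of_dvd_pow hdvd)
  have : Associated p' p := hi'.associated_of_dvd hi hdvd2
  exact ⟨Polynomial.eq_of_monic_of_associated hm' hm this, rfl⟩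

lemma polyLambda_pow {p : Polynomial F} (hm : p.Monic) (hi : Irreducible p) {k : ℕ}
    (hk : 1 ≤ k) : polyLambda (p ^ k) = p.natDegree := by
  have hh : ∃ q : Polynomial F, (q.Monic ∧ Irreducible q) ∧
      ∃ u : F, u ≠ 0 ∧ ∃ m : ℕ, 1 ≤ m ∧ p ^ k = Polynomial.C u * q ^ m :=
    ⟨p, ⟨hm, hi⟩, 1, one_ne_zero, k, hk, by simp⟩
  rw [polyLambda, dif_pos hh]
  obtain ⟨⟨hm', hi'⟩, u, hu, m, hm1, heq⟩ := Classical.choose_spec hh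
  rw [(monic_eq_of_rep hm hi hk hm' hi' hm1 heq).1]

lemma polyLambda_rep {g : Polynomial F} (hmon : g.Monic) (hne : polyLambda g ≠ 0) :
    ∃ p : Polynomial F, p.Monic ∧ Irreducible p ∧ ∃ j : ℕ, 1 ≤ j ∧ g = p ^ j ∧
      polyLambda g = p.natDegree := by
  rw [polyLambda] at hne
  split_ifs at hne with hh
  · obtain ⟨p, ⟨hpm, hpi⟩, u, hu, k, hk, heq⟩ := hh
    have hu1 : u = 1 := by
      have h1 := hmon.leadingCoeff
      rw [heq, Polynomial.leadingCoeff_mul, Polynomial.leadingCoeff_C,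
        (hpm.pow k).leadingCoeff, mul_one] at h1
      exact h1
    subst hu1
    rw [map_one, one_mul] at heq
    exact ⟨p, hpm, hpi, k, hk, heq, heq ▸ polyLambda_pow hpm hpi hk⟩
  · exact absurd rfl hne

lemma polyLambda_one : polyLambda (1 : Polynomial F) = 0 := by
  rw [polyLambda, dif_neg]
  rintro ⟨p, ⟨hpm, hpi⟩, u, hu, k, hk, heq⟩
  have : (1 : Polynomial F).natDegree = (Polynomial.C u * p ^ k).natDegree := by rw [← heq]
  rw [Polynomial.natDegree_one, Polynomial.natDegree_mul (by simpa using hu)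
    (pow_ne_zero _ hpm.ne_zero), Polynomial.natDegree_C, Polynomial.natDegree_pow] at this
  have hd1 : 0 < p.natDegree := hpi.natDegree_pos
  have h0 : k * p.natDegree = 0 := by omega
  rcases Nat.mul_eq_zero.1 h0 with h | h <;> omega

lemma card_MD_dvd {k : ℕ} {e : Polynomial F} (hm : e.Monic) (hle : e.natDegree ≤ k) :
    ((MD k).filter (fun g => e ∣ g)).card = Fintype.card F ^ (k - e.natDegree) := by
  rw [← card_MD (k - e.natDegree)]
  symm
  apply Finset.card_bij (fun h _ => e * h)
  · intro h hh
    rw [mem_MD] at hh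
    rw [Finset.mem_filter, mem_MD]
    exact ⟨⟨hm.mul hh.1, by rw [Polynomial.natDegree_mul hm.ne_zero hh.1.ne_zero, hh.2]; omega⟩,
      Dvd.intro _ rfl⟩
  · intro a ha b hb hab
    exact mul_left_cancel₀ hm.ne_zero hab
  · intro g hg
    rw [Finset.mem_filter, mem_MD] at hg
    obtain ⟨⟨hgm, hgd⟩, c, rfl⟩ := hg
    have hcm : c.Monic := by
      have := hgm.leadingCoeff
      rw [Polynomial.leadingCoeff_mul, hm.leadingCoeff, one_mul] at this
      exact this
    refine ⟨c, ?_, rfl⟩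
    rw [mem_MD]
    refine ⟨hcm, ?_⟩
    rw [Polynomial.natDegree_mul hm.ne_zero hcm.ne_zero] at hgd
    omega

/-- monic irreducibles of degree ≤ K -/
noncomputable def PIr (K : ℕ) : Finset (Polynomial F) :=
  ((Finset.range (K+1)).biUnion MD).filter (fun p => Irreducible p)

lemma mem_PIr {K : ℕ} {p : Polynomial F} :
    p ∈ PIr K ↔ p.Monic ∧ Irreducible p ∧ p.natDegree ≤ K := by
  simp only [PIr, Finset.mem_filter, Finset.mem_biUnion, Finset.mem_range, mem_MD]
  constructor
  · rintro ⟨⟨i, hi, hm, rfl⟩, hirr⟩; exact ⟨hm, hirr, by omega⟩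
  · rintro ⟨hm, hirr, hle⟩; exact ⟨⟨p.natDegree, by omega, hm, rfl⟩, hirr⟩

lemma pow_dvd_iff_le_count {g p : Polynomial F} (hg : g ≠ 0) (hm : p.Monic)
    (hi : Irreducible p) {j : ℕ} :
    p ^ j ∣ g ↔ j ≤ (normalizedFactors g).count p := by
  rw [pow_dvd_iff_le_emultiplicity, emultiplicity_eq_count_normalizedFactors hi hg,
    hm.normalize_eq_self, Nat.cast_le]

lemma count_le_natDegree {g p : Polynomial F} (hg : g ≠ 0) (hm : p.Monic)
    (hi : Irreducible p) : (normalizedFactors g).count p ≤ g.natDegree := by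
  have hdvd : p ^ ((normalizedFactors g).count p) ∣ g :=
    (pow_dvd_iff_le_count hg hm hi).2 le_rfl
  have := Polynomial.natDegree_le_of_dvd hdvd hg
  rw [Polynomial.natDegree_pow] at this
  have hp1 : 1 ≤ p.natDegree := hi.natDegree_pos
  nlinarith [Nat.mul_le_mul_left ((normalizedFactors g).count p) hp1]

lemma normalizedFactors_monic {g p : Polynomial F} (hp : p ∈ normalizedFactors g) :
    p.Monic := by
  have h1 := normalize_normalized_factor p hp
  have h2 : p ≠ 0 := (irreducible_of_normalized_factor p hp).ne_zero
  rw [← h1]; exact Polynomial.monic_normalize h2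

lemma prod_normalizedFactors_of_monic {g : Polynomial F} (hg : g.Monic) :
    (normalizedFactors g).prod = g := by
  refine Polynomial.eq_of_monic_of_associated ?_ hg (prod_normalizedFactors hg.ne_zero)
  have := Polynomial.monic_multiset_prod_of_monic (normalizedFactors g) id
    (fun p hp => normalizedFactors_monic hp)
  simpa using this

lemma sum_factor_degrees {g : Polynomial F} (hg : g.Monic) :
    ∑ p ∈ (normalizedFactors g).toFinset,
      (normalizedFactors g).count p * p.natDegree = g.natDegree := by
  have h1 : ((normalizedFactors g).map Polynomial.natDegree).sum = g.natDegree := by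
    rw [← Polynomial.natDegree_multiset_prod_of_monic _
      (fun p hp => normalizedFactors_monic hp), prod_normalizedFactors_of_monic hg]
  rw [← h1, Finset.sum_multiset_map_count]
  simp [smul_eq_mul]

/-- Claim A -/
lemma claimA {K : ℕ} {g : Polynomial F} (hg : g ∈ MD K) :
    ∑ t ∈ ((PIr K ×ˢ Finset.Icc 1 K).filter (fun t : Polynomial F × ℕ => t.1 ^ t.2 ∣ g)),
      t.1.natDegree = K := by
  rw [mem_MD] at hg
  obtain ⟨hgm, hK⟩ := hg
  rw [Finset.sum_filter, Finset.sum_product]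
  have hinner : ∀ p ∈ (PIr K : Finset (Polynomial F)),
      (∑ j ∈ Finset.Icc 1 K, if p ^ j ∣ g then p.natDegree else 0)
        = (normalizedFactors g).count p * p.natDegree := by
    intro p hp
    rw [mem_PIr] at hp
    obtain ⟨hm, hi, hle⟩ := hp
    have hcle := count_le_natDegree hgm.ne_zero hm hi
    rw [← Finset.sum_filter]
    have : (Finset.Icc 1 K).filter (fun j => p ^ j ∣ g)
        = Finset.Icc 1 ((normalizedFactors g).count p) := by
      ext j
      simp only [Finset.mem_filter, Finset.mem_Icc,
        pow_dvd_iff_le_count hgm.ne_zero hm hi]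
      omega
    rw [this]
    simp [Nat.card_Icc, mul_comm]
  rw [Finset.sum_congr rfl hinner]
  refine Eq.trans (Finset.sum_subset ?_ ?_).symm (by rw [sum_factor_degrees hgm, hK])
  · intro p hp
    rw [Multiset.mem_toFinset] at hp
    rw [mem_PIr]
    have hi := irreducible_of_normalized_factor p hp
    refine ⟨normalizedFactors_monic hp, hi, ?_⟩
    have := Polynomial.natDegree_le_of_dvd (dvd_of_mem_normalizedFactors hp) hgm.ne_zero
    omega
  · intro p _ hp
    rw [Multiset.mem_toFinset] at hp
    simp [Multiset.count_eq_zero_of_notMem hp]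

local notation "q" => Fintype.card F

/-- Claim D: the fiber sum equals the Λ-sum in degree m. -/
lemma claimD {K m : ℕ} (hm1 : 1 ≤ m) (hmK : m ≤ K) :
    ∑ t ∈ (((PIr K : Finset (Polynomial F)) ×ˢ Finset.Icc 1 K).filter
        (fun t : Polynomial F × ℕ => t.2 * t.1.natDegree = m)), t.1.natDegree
      = ∑ g ∈ (MD m : Finset (Polynomial F)), polyLambda g := by
  rw [← Finset.sum_filter_ne_zero (MD m) (f := fun g => polyLambda g)]
  apply Finset.sum_bij (fun t _ => t.1 ^ t.2)
  · rintro ⟨p, j⟩ ht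
    simp only [Finset.mem_filter, Finset.mem_product, mem_PIr, Finset.mem_Icc] at ht
    obtain ⟨⟨⟨hpm, hpi, hpK⟩, hj1, hjK⟩, hdeg⟩ := ht
    simp only [Finset.mem_filter, mem_MD]
    refine ⟨⟨hpm.pow j, by rw [Polynomial.natDegree_pow]; exact hdeg⟩, ?_⟩
    rw [polyLambda_pow hpm hpi hj1]
    have := hpi.natDegree_pos
    omega
  · rintro ⟨p, j⟩ ht ⟨p', j'⟩ ht' heq
    simp only [Finset.mem_filter, Finset.mem_product, mem_PIr, Finset.mem_Icc] at ht ht'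
    obtain ⟨⟨⟨hpm, hpi, -⟩, hj1, -⟩, hdeg⟩ := ht
    obtain ⟨⟨⟨hpm', hpi', -⟩, hj1', -⟩, hdeg'⟩ := ht'
    simp only at heq
    have hpp : p = p' := by
      have h1 : p ∣ p' ^ j' := heq ▸ dvd_pow_self p (by omega)
      have h2 : p ∣ p' := hpi.prime.dvd_of_dvd_pow h1
      exact Polynomial.eq_of_monic_of_associated hpm hpm' (hpi.associated_of_dvd hpi' h2)
    subst hpp
    have : j = j' := by
      have := hpi.natDegree_pos
      have h3 : j * p.natDegree = j' * p.natDegree := by rw [hdeg, hdeg']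
      exact Nat.eq_of_mul_eq_mul_right (by omega) h3
    simp [this]
  · intro g hg
    simp only [Finset.mem_filter, mem_MD] at hg
    obtain ⟨⟨hgm, hgd⟩, hne⟩ := hg
    obtain ⟨p, hpm, hpi, j, hj1, rfl, hval⟩ := polyLambda_rep hgm hne
    have hdp := hpi.natDegree_pos
    have hdeg : j * p.natDegree = m := by rw [← hgd, Polynomial.natDegree_pow]
    refine ⟨⟨p, j⟩, ?_, rfl⟩
    simp only [Finset.mem_filter, Finset.mem_product, mem_PIr, Finset.mem_Icc]
    exact ⟨⟨⟨hpm, hpi, by nlinarith⟩, hj1, by nlinarith⟩, hdeg⟩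
  · rintro ⟨p, j⟩ ht
    simp only [Finset.mem_filter, Finset.mem_product, mem_PIr, Finset.mem_Icc] at ht
    obtain ⟨⟨⟨hpm, hpi, -⟩, hj1, -⟩, -⟩ := ht
    rw [polyLambda_pow hpm hpi hj1]

/-- Claim B: the double-counting identity. -/
lemma claimB {K : ℕ} (hK : 1 ≤ K) :
    K * q ^ K = ∑ m ∈ Finset.Icc 1 K, (∑ g ∈ (MD m : Finset (Polynomial F)), polyLambda g) * q ^ (K - m) := by
  have h1 : K * q ^ K = ∑ g ∈ MD K, ∑ t ∈ (((PIr K : Finset (Polynomial F)) ×ˢ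
      Finset.Icc 1 K).filter (fun t : Polynomial F × ℕ => t.1 ^ t.2 ∣ g)), t.1.natDegree := by
    rw [Finset.sum_congr rfl (fun g hg => claimA hg), Finset.sum_const, card_MD,
      smul_eq_mul, mul_comm]
  -- swap the order of summation
  have h2 : ∑ g ∈ MD K, ∑ t ∈ (((PIr K : Finset (Polynomial F)) ×ˢ
        Finset.Icc 1 K).filter (fun t : Polynomial F × ℕ => t.1 ^ t.2 ∣ g)), t.1.natDegree
      = ∑ t ∈ ((PIr K : Finset (Polynomial F)) ×ˢ Finset.Icc 1 K),
          ∑ g ∈ (MD K).filter (fun g => t.1 ^ t.2 ∣ g), t.1.natDegree := by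
    simp only [Finset.sum_filter]
    exact Finset.sum_comm
  -- evaluate the inner count
  have h3 : ∀ t ∈ ((PIr K : Finset (Polynomial F)) ×ˢ Finset.Icc 1 K),
      (∑ g ∈ (MD K).filter (fun g => t.1 ^ t.2 ∣ g), t.1.natDegree)
        = if t.2 * t.1.natDegree ≤ K then t.1.natDegree * q ^ (K - t.2 * t.1.natDegree)
          else 0 := by
    rintro ⟨p, j⟩ ht
    simp only [Finset.mem_product, mem_PIr, Finset.mem_Icc] at ht
    obtain ⟨⟨hpm, hpi, hpK⟩, hj1, hjK⟩ := ht
    simp only [Finset.sum_const, smul_eq_mul]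
    split_ifs with h
    · rw [card_MD_dvd (hpm.pow j) (by rw [Polynomial.natDegree_pow]; exact h),
        Polynomial.natDegree_pow]
      exact mul_comm _ _
    · have : (MD K).filter (fun g => p ^ j ∣ g) = ∅ := by
        rw [Finset.filter_eq_empty_iff]
        intro g hg
        rw [mem_MD] at hg
        intro hdvd
        have := Polynomial.natDegree_le_of_dvd hdvd hg.1.ne_zero
        rw [Polynomial.natDegree_pow, hg.2] at this
        omega
      rw [this]; simp
  rw [h1, h2, Finset.sum_congr rfl h3, ← Finset.sum_filter]
  -- now fiber over m = j * deg p
  rw [← Finset.sum_fiberwise_of_maps_to (g := fun t : Polynomial F × ℕ =>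
    t.2 * t.1.natDegree) (t := Finset.Icc 1 K) ?_]
  · apply Finset.sum_congr rfl
    intro m hm
    rw [Finset.mem_Icc] at hm
    rw [← claimD hm.1 hm.2, Finset.filter_filter, Finset.sum_mul]
    apply Finset.sum_congr
    · apply Finset.filter_congr
      rintro ⟨p, j⟩ ht
      simp only
      constructor
      · rintro ⟨-, h⟩; exact h
      · rintro h; exact ⟨by omega, h⟩
    · rintro ⟨p, j⟩ ht
      simp only [Finset.mem_filter] at ht
      rw [ht.2]
  · rintro ⟨p, j⟩ ht
    simp only [Finset.mem_filter, Finset.mem_product, mem_PIr, Finset.mem_Icc] at ht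
    obtain ⟨⟨⟨hpm, hpi, -⟩, hj1, -⟩, hle⟩ := ht
    have := hpi.natDegree_pos
    rw [Finset.mem_Icc]
    constructor
    · nlinarith
    · exact hle

/-- The prime polynomial theorem with von Mangoldt weights. -/
lemma lambda_sum (K : ℕ) (hK : 1 ≤ K) :
    ∑ g ∈ (MD K : Finset (Polynomial F)), polyLambda g = q ^ K := by
  induction K using Nat.strong_induction_on with
  | _ K ih =>
    have hB := claimB (F := F) hK
    have hsplit : Finset.Icc 1 K = insert K (Finset.Icc 1 (K - 1)) := by
      ext m; simp only [Finset.mem_Icc, Finset.mem_insert]; omega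
    rw [hsplit, Finset.sum_insert (by rw [Finset.mem_Icc]; omega)] at hB
    have hterm : ∀ m ∈ Finset.Icc 1 (K - 1),
        (∑ g ∈ (MD m : Finset (Polynomial F)), polyLambda g) * q ^ (K - m) = q ^ K := by
      intro m hm
      rw [Finset.mem_Icc] at hm
      rw [ih m (by omega) hm.1, ← pow_add]
      congr 1
      omega
    rw [Finset.sum_congr rfl hterm, Finset.sum_const, Nat.card_Icc, smul_eq_mul,
      Nat.sub_self, pow_zero, mul_one] at hB
    have hKsplit : K * q ^ K = q ^ K + (K + 1 - 1 - 1) * q ^ K := by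
      cases K with
      | zero => omega
      | succ k => simp [Nat.succ_mul, add_comm]
    have := hKsplit.symm.trans hB
    exact (Nat.add_right_cancel this).symm

noncomputable def primeOf {F : Type*} [Field F] (g : Polynomial F) : Polynomial F :=
  if h : ∃ p : Polynomial F, (p.Monic ∧ Irreducible p) ∧ ∃ j : ℕ, 1 ≤ j ∧ g = p ^ j
  then Classical.choose h else 1

lemma primeOf_pow {p : Polynomial F} (hm : p.Monic) (hi : Irreducible p) {j : ℕ}
    (hj : 1 ≤ j) : primeOf (p ^ j) = p := by
  have h : ∃ p' : Polynomial F, (p'.Monic ∧ Irreducible p') ∧ ∃ j' : ℕ, 1 ≤ j' ∧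
      p ^ j = p' ^ j' := ⟨p, ⟨hm, hi⟩, j, hj, rfl⟩
  rw [primeOf, dif_pos h]
  obtain ⟨⟨hm', hi'⟩, j', hj', heq⟩ := Classical.choose_spec h
  refine (monic_eq_of_rep (u := (1:F)) hm hi hj hm' hi' hj' ?_).1
  rw [map_one, one_mul]; exact heq

/-- the sum of Λ over monic degree-k polynomials NOT coprime to f is at most deg f -/
lemma bad_sum_le {f : Polynomial F} (hf : f ≠ 0) (k : ℕ) :
    ∑ g ∈ (MD k : Finset (Polynomial F)).filter (fun g => ¬ IsCoprime g f), polyLambda g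
      ≤ f.natDegree := by
  rw [← Finset.sum_filter_ne_zero]
  set s := ((MD k).filter (fun g => ¬ IsCoprime g f)).filter (fun g => polyLambda g ≠ 0)
    with hs
  have key : ∀ g ∈ s, (primeOf g).Monic ∧ Irreducible (primeOf g) ∧ primeOf g ∣ f ∧
      (∃ j : ℕ, 1 ≤ j ∧ g = primeOf g ^ j) ∧ polyLambda g = (primeOf g).natDegree := by
    intro g hg
    rw [hs, Finset.filter_filter, Finset.mem_filter, mem_MD] at hg
    obtain ⟨⟨hgm, hgd⟩, hnc, hne⟩ := hg
    obtain ⟨p, hpm, hpi, j, hj1, rfl, hval⟩ := polyLambda_rep hgm hne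
    rw [primeOf_pow hpm hpi hj1]
    refine ⟨hpm, hpi, ?_, ⟨j, hj1, rfl⟩, hval⟩
    by_contra hdvd
    exact hnc <| ((hpi.coprime_iff_not_dvd).2 hdvd).pow_left
  have hinj : Set.InjOn primeOf (s : Set (Polynomial F)) := by
    intro g hg g' hg' heq
    rw [Finset.mem_coe] at hg hg'
    obtain ⟨-, hpi, -, ⟨j, hj1, hgj⟩, -⟩ := key g hg
    obtain ⟨-, -, -, ⟨j', hj1', hgj'⟩, -⟩ := key g' hg'
    rw [hs, Finset.filter_filter, Finset.mem_filter, mem_MD] at hg hg'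
    have hd := hpi.natDegree_pos
    have h1 : k = j * (primeOf g).natDegree := by
      rw [← hg.1.2, congrArg Polynomial.natDegree hgj, Polynomial.natDegree_pow]
    have h2 : k = j' * (primeOf g).natDegree := by
      rw [← hg'.1.2, congrArg Polynomial.natDegree hgj', Polynomial.natDegree_pow, heq]
    have : j = j' := Nat.eq_of_mul_eq_mul_right hd (by omega)
    rw [hgj, hgj', heq, this]
  have himg : s.image primeOf ⊆ (normalizedFactors f).toFinset := by
    intro p hp
    rw [Finset.mem_image] at hp
    obtain ⟨g, hg, rfl⟩ := hp
    obtain ⟨hpm, hpi, hpd, -, -⟩ := key g hg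
    rw [Multiset.mem_toFinset, ← Multiset.count_pos]
    have : 1 ≤ (normalizedFactors f).count (primeOf g) := by
      rw [← pow_dvd_iff_le_count hf hpm hpi, pow_one]
      exact hpd
    omega
  have hDsum : ∑ p ∈ (normalizedFactors f).toFinset, p.natDegree ≤ f.natDegree := by
    have h1 : ((normalizedFactors f).map Polynomial.natDegree).sum = f.natDegree := by
      rw [← Polynomial.natDegree_multiset_prod_of_monic _
        (fun p hp => normalizedFactors_monic hp)]
      have hass := prod_normalizedFactors hf
      have h2 := Polynomial.natDegree_le_of_dvd hass.dvd hf
      have h3 := Polynomial.natDegree_le_of_dvd hass.symm.dvd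
        (by intro h0; rw [h0] at hass; exact hf (eq_zero_of_zero_dvd hass.dvd))
      omega
    rw [← h1, Finset.sum_multiset_map_count]
    apply Finset.sum_le_sum
    intro p hp
    rw [Multiset.mem_toFinset, ← Multiset.count_pos] at hp
    simp only [smul_eq_mul]
    nlinarith
  calc ∑ g ∈ s, polyLambda g = ∑ g ∈ s, (primeOf g).natDegree :=
        Finset.sum_congr rfl (fun g hg => (key g hg).2.2.2.2)
    _ = ∑ p ∈ s.image primeOf, p.natDegree :=
        (Finset.sum_image (fun x hx y hy h => hinj hx hy h)).symm
    _ ≤ ∑ p ∈ (normalizedFactors f).toFinset, p.natDegree :=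
        Finset.sum_le_sum_of_subset himg
    _ ≤ f.natDegree := hDsum

lemma quot_card {f : Polynomial F} (hf : f ≠ 0) :
    Nat.card (Polynomial F ⧸ Ideal.span {f})ˣ ≤ Fintype.card F ^ f.natDegree ∧
      0 < Nat.card (Polynomial F ⧸ Ideal.span {f})ˣ := by
  have hbasis : Module.Basis (Fin f.natDegree) F (AdjoinRoot f) :=
    (AdjoinRoot.powerBasis hf).basis.reindex
      (finCongr (AdjoinRoot.powerBasis_dim hf))
  haveI : Fintype (AdjoinRoot f) := Module.fintypeOfFintype hbasis
  haveI : Finite (Polynomial F ⧸ Ideal.span {f}) :=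
    Finite.of_fintype (AdjoinRoot f)
  have h2 : Nat.card (Polynomial F ⧸ Ideal.span {f}) = Fintype.card F ^ f.natDegree := by
    have : Nat.card (AdjoinRoot f) = Fintype.card F ^ f.natDegree := by
      rw [Nat.card_eq_fintype_card, Module.card_fintype hbasis, Fintype.card_fin]
    exact this
  constructor
  · calc Nat.card (Polynomial F ⧸ Ideal.span {f})ˣ
        ≤ Nat.card (Polynomial F ⧸ Ideal.span {f}) :=
          Nat.card_le_card_of_injective (fun u : (Polynomial F ⧸ Ideal.span {f})ˣ => (u : Polynomial F ⧸ Ideal.span {f})) Units.val_injective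
    _ = Fintype.card F ^ f.natDegree := h2
  · exact Nat.card_pos

end Aux

open Finset UniqueFactorizationMonoid in
/-- Let `f` be squarefree of degree `n ≥ 2`, `B = F_q[t]/(f)`, `d ≥ 1`, `q ≥ n`. Then
`M(a,d) = (1/|Bˣ|)·(Σ_{g monic, deg g ≤ d, (g,f)=1} Λ(g))² ≥ q^(2d-n) - 2dn·q^(d-n)`. -/
theorem main_term_lower_bound (F : Type*) [Field F] [Fintype F]
    (f : Polynomial F) (hsf : Squarefree f) (n : ℕ) (hn : 2 ≤ n) (hdeg : f.natDegree = n)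
    (d : ℕ) (hd : 1 ≤ d) (hq : n ≤ Fintype.card F) :
    (1 / (Nat.card (Polynomial F ⧸ Ideal.span {f})ˣ : ℝ)) *
        (∑ᶠ g ∈ {g : Polynomial F | g.Monic ∧ g.natDegree ≤ d ∧ IsCoprime g f},
          (polyLambda g : ℝ)) ^ 2
      ≥ (Fintype.card F : ℝ) ^ (2 * (d : ℤ) - n) -
          2 * d * n * (Fintype.card F : ℝ) ^ ((d : ℤ) - n) := by
  have hf : f ≠ 0 := hsf.ne_zero
  set q := Fintype.card F with hqdef
  have hq2 : 2 ≤ q := le_trans hn hq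
  set Tfin : Finset (Polynomial F) :=
    ((Finset.range (d+1)).biUnion (MD (F := F))).filter (fun g => IsCoprime g f) with hT
  -- replace the finsum by a Finset sum
  have hset : {g : Polynomial F | g.Monic ∧ g.natDegree ≤ d ∧ IsCoprime g f}
      = (Tfin : Set (Polynomial F)) := by
    ext g
    simp only [Set.mem_setOf_eq, hT, Finset.coe_filter, Finset.mem_biUnion, Finset.mem_range,
      mem_MD, Set.mem_setOf_eq]
    constructor
    · rintro ⟨h1, h2, h3⟩; exact ⟨⟨g.natDegree, by omega, h1, rfl⟩, h3⟩
    · rintro ⟨⟨i, hi, h1, rfl⟩, h3⟩; exact ⟨h1, by omega, h3⟩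
  rw [hset, finsum_mem_coe_finset]
  -- decompose the sum by degree
  have hdisj : ∀ k ∈ Finset.range (d+1), ∀ k' ∈ Finset.range (d+1), k ≠ k' →
      Disjoint ((MD (F := F) k).filter (fun g => IsCoprime g f))
        ((MD (F := F) k').filter (fun g => IsCoprime g f)) := by
    intro k _ k' _ hkk'
    rw [Finset.disjoint_left]
    intro g hg hg'
    rw [Finset.mem_filter, mem_MD] at hg hg'
    exact hkk' (hg.1.2 ▸ hg'.1.2)
  have hsplit : ∑ g ∈ Tfin, (polyLambda g : ℝ)
      = ∑ k ∈ Finset.range (d+1), ∑ g ∈ (MD (F := F) k).filter (fun g => IsCoprime g f),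
          (polyLambda g : ℝ) := by
    rw [hT, Finset.filter_biUnion]
    exact Finset.sum_biUnion hdisj
  -- per-degree lower bound
  have hgood : ∀ k, 1 ≤ k →
      (q : ℝ) ^ k - n ≤ ∑ g ∈ (MD (F := F) k).filter (fun g => IsCoprime g f), (polyLambda g : ℝ) := by
    intro k hk
    have h1 : (∑ g ∈ (MD (F := F) k).filter (fun g => IsCoprime g f), polyLambda g)
        + (∑ g ∈ (MD (F := F) k).filter (fun g => ¬ IsCoprime g f), polyLambda g) = q ^ k := by
      rw [Finset.sum_filter_add_sum_filter_not, lambda_sum k hk]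
    have h2 := bad_sum_le (F := F) hf k
    rw [hdeg] at h2
    have h3 : (q : ℝ) ^ k ≤ (∑ g ∈ (MD (F := F) k).filter (fun g => IsCoprime g f), polyLambda g) + n := by
      have : (q : ℕ) ^ k ≤ (∑ g ∈ (MD (F := F) k).filter (fun g => IsCoprime g f), polyLambda g) + n := by
        omega
      exact_mod_cast this
    push_cast at h3 ⊢
    linarith
  -- total lower bound
  set S : ℝ := ∑ g ∈ Tfin, (polyLambda g : ℝ) with hS
  have hS0 : 0 ≤ S := Finset.sum_nonneg fun g _ => by positivity
  have hSlow : (q : ℝ) ^ d - d * n ≤ S := by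
    rw [hsplit]
    have hsub : Finset.Icc 1 d ⊆ Finset.range (d+1) := by
      intro k hk; rw [Finset.mem_Icc] at hk; rw [Finset.mem_range]; omega
    have h4 : ∑ k ∈ Finset.Icc 1 d, ((q:ℝ)^k - n)
        ≤ ∑ k ∈ Finset.Icc 1 d, ∑ g ∈ (MD (F := F) k).filter (fun g => IsCoprime g f),
            (polyLambda g : ℝ) :=
      Finset.sum_le_sum fun k hk => hgood k (Finset.mem_Icc.1 hk).1
    have h5 : (∑ k ∈ Finset.Icc 1 d, ∑ g ∈ (MD (F := F) k).filter (fun g => IsCoprime g f),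
          (polyLambda g : ℝ))
        ≤ ∑ k ∈ Finset.range (d+1), ∑ g ∈ (MD (F := F) k).filter (fun g => IsCoprime g f),
            (polyLambda g : ℝ) :=
      Finset.sum_le_sum_of_subset_of_nonneg hsub fun k _ _ =>
        Finset.sum_nonneg fun g _ => by positivity
    have h6 : (q:ℝ)^d - d*n ≤ ∑ k ∈ Finset.Icc 1 d, ((q:ℝ)^k - n) := by
      rw [Finset.sum_sub_distrib, Finset.sum_const, Nat.card_Icc]
      have h7 : (q:ℝ)^d ≤ ∑ k ∈ Finset.Icc 1 d, (q:ℝ)^k :=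
        Finset.single_le_sum (f := fun k => (q:ℝ)^k) (fun k _ => by positivity)
          (Finset.mem_Icc.2 ⟨hd, le_rfl⟩)
      simp only [Nat.add_sub_cancel, nsmul_eq_mul]
      push_cast
      linarith
    linarith
  -- cardinality bounds
  obtain ⟨hNle, hNpos⟩ := quot_card (F := F) hf
  rw [hdeg] at hNle
  set N : ℕ := Nat.card (Polynomial F ⧸ Ideal.span {f})ˣ with hN
  have hN1 : (1 : ℝ) ≤ N := by exact_mod_cast hNpos
  have hNq : (N : ℝ) ≤ (q : ℝ) ^ n := by exact_mod_cast hNle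
  -- final arithmetic
  have hQ0 : (0 : ℝ) < q := by positivity
  have hQd : (0 : ℝ) < (q:ℝ)^d := by positivity
  have hdn0 : (0 : ℝ) ≤ (d : ℝ) * n := by positivity
  have hkey : (q:ℝ)^(2*d) - 2*d*n*(q:ℝ)^d ≤ S^2 := by
    have h2d : (q:ℝ)^(2*d) = ((q:ℝ)^d)^2 := by rw [← pow_mul, mul_comm 2 d, pow_mul]
    rcases le_or_gt ((d:ℝ)*n) ((q:ℝ)^d) with hcase | hcase
    · have hnn : (0:ℝ) ≤ (q:ℝ)^d - d*n := by linarith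
      have hsq : ((q:ℝ)^d - d*n) * ((q:ℝ)^d - d*n) ≤ S * S :=
        mul_le_mul hSlow hSlow hnn hS0
      nlinarith [sq_nonneg ((d:ℝ)*n)]
    · have : (q:ℝ)^d * (q:ℝ)^d < ((d:ℝ)*n) * (q:ℝ)^d :=
        mul_lt_mul_of_pos_right hcase hQd
      nlinarith [sq_nonneg S]
  have hzpow1 : (q : ℝ) ^ (2 * (d : ℤ) - n) = (q:ℝ)^(2*d) / (q:ℝ)^n := by
    rw [zpow_sub₀ (ne_of_gt hQ0)]
    norm_cast
  have hzpow2 : (q : ℝ) ^ ((d : ℤ) - n) = (q:ℝ)^d / (q:ℝ)^n := by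
    rw [zpow_sub₀ (ne_of_gt hQ0)]
    norm_cast
  rw [ge_iff_le, hzpow1, hzpow2]
  have hQn : (0:ℝ) < (q:ℝ)^n := by positivity
  calc (q:ℝ)^(2*d) / (q:ℝ)^n - 2*d*n*((q:ℝ)^d / (q:ℝ)^n)
      = ((q:ℝ)^(2*d) - 2*d*n*(q:ℝ)^d) / (q:ℝ)^n := by ring
    _ ≤ S^2 / (q:ℝ)^n := by
        exact (div_le_div_iff_of_pos_right hQn).2 hkey
    _ ≤ S^2 / N := by
        exact div_le_div_of_nonneg_left (sq_nonneg S) (by linarith) hNq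
    _ = 1 / N * S^2 := by ring
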